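/- (Propagation of the 𝒴¹ bound for mild Navier–Stokes solutions.) Let u₀ ∈ L²(ℝ³; ℝ³) with ‖u₀‖_{𝒴¹} := sup_{ξ} |ξ| |û₀(ξ)| < ∞, and let u : [0,∞) → L²(ℝ³; ℝ³) satisfy ‖u(τ)‖_{L²} ≤ ‖u₀‖_{L²} for all τ ≥ 0 and the Duhamel identity in Fourier variables: û(t,ξ) = e^{−t|ξ|²} û₀(ξ) − ∫₀^t e^{−(t−τ)|ξ|²} m(ξ) ( iξ · F[u⊗u](τ,ξ) ) dτ for all t ≥ 0 and a.e. ξ ∈ ℝ³. Then sup_{t ≥ 0} ‖u(t)‖_{𝒴¹} ≤ ‖u₀‖_{𝒴¹} + ‖u₀‖²_{L²}. -/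

import Mathlib

open MeasureTheory Real
open scoped FourierTransform

noncomputable section

/-- Componentwise Fourier transform of a vector field `g : ℝ³ → ℝ³`,
viewed as a `ℂ³`-valued function of the frequency `ξ`. -/
def ftv (g : EuclideanSpace ℝ (Fin 3) → EuclideanSpace ℝ (Fin 3))
    (ξ : EuclideanSpace ℝ (Fin 3)) : EuclideanSpace ℂ (Fin 3) :=
  (EuclideanSpace.equiv (Fin 3) ℂ).symm fun i => 𝓕 (fun x => ((g x i : ℝ) : ℂ)) ξ

/-- The Leray projection multiplier `m(ξ)` applied to a vector `w ∈ ℂ³`: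
`(m(ξ)w)_i = w_i - ξ_i (ξ·w)/|ξ|²` (for `ξ ≠ 0`). -/
def lerayM (ξ : EuclideanSpace ℝ (Fin 3)) (w : Fin 3 → ℂ) : Fin 3 → ℂ :=
  fun i => w i - ((ξ i : ℂ) * ∑ j, (ξ j : ℂ) * w j) / ((‖ξ‖ : ℂ) ^ 2)

/-- The vector `iξ · F[u⊗u](τ,ξ)`, with `k`-th component
`∑_j iξ_j 𝓕(u_j u_k)(ξ)`. -/
def nonlinNS (u : ℝ → EuclideanSpace ℝ (Fin 3) → EuclideanSpace ℝ (Fin 3))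
    (τ : ℝ) (ξ : EuclideanSpace ℝ (Fin 3)) : Fin 3 → ℂ :=
  fun k => ∑ j, Complex.I * (ξ j : ℂ) *
    𝓕 (fun x => ((u τ x j : ℝ) : ℂ) * ((u τ x k : ℝ) : ℂ)) ξ



section helpers
variable {V : Type*} [NormedAddCommGroup V] [InnerProductSpace ℝ V] [MeasurableSpace V]
  [BorelSpace V] [FiniteDimensional ℝ V]

lemma ft_zero_of_not_integrable {f : V → ℂ} (hf : ¬ Integrable f volume) (w : V) :
    𝓕 f w = 0 := by
  rw [Real.fourier_eq]
  apply integral_undef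
  rw [Real.fourierIntegral_convergent_iff]
  exact hf

lemma ft_continuous {f : V → ℂ} (hf : Integrable f volume) : Continuous (𝓕 f) :=
  VectorFourier.fourierIntegral_continuous Real.continuous_fourierChar
    (by exact continuous_inner) hf

lemma ft_norm_le (f : V → ℂ) (w : V) : ‖𝓕 f w‖ ≤ ∫ v, ‖f v‖ :=
  VectorFourier.norm_fourierIntegral_le_integral_norm _ _ _ _ _

end helpers


lemma rpow2 (x : ℝ) : x ^ (2:ℝ) = x ^ (2:ℕ) := by
  rw [show ((2:ℝ)) = ((2:ℕ):ℝ) by norm_num, Real.rpow_natCast]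

lemma cs_integral {α : Type*} [MeasurableSpace α] {μ : Measure α} {f g : α → ℝ}
    (hf : MemLp f 2 μ) (hg : MemLp g 2 μ) :
    ∫ a, |f a| * |g a| ∂μ ≤ Real.sqrt (∫ a, f a ^ 2 ∂μ) * Real.sqrt (∫ a, g a ^ 2 ∂μ) := by
  have hpq : (2:ℝ).HolderConjugate 2 := Real.HolderConjugate.two_two
  have h2 : ENNReal.ofReal (2:ℝ) = 2 := by norm_num [ENNReal.ofReal_ofNat]
  have h := MeasureTheory.integral_mul_norm_le_Lp_mul_Lq (μ := μ) (f := f) (g := g) hpq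
    (by rwa [h2]) (by rwa [h2])
  calc ∫ a, |f a| * |g a| ∂μ = ∫ a, ‖f a‖ * ‖g a‖ ∂μ := by simp [Real.norm_eq_abs]
    _ ≤ (∫ a, ‖f a‖ ^ (2:ℝ) ∂μ) ^ (1/(2:ℝ)) * (∫ a, ‖g a‖ ^ (2:ℝ) ∂μ) ^ (1/(2:ℝ)) := h
    _ = Real.sqrt (∫ a, f a ^ 2 ∂μ) * Real.sqrt (∫ a, g a ^ 2 ∂μ) := by
        rw [Real.sqrt_eq_rpow, Real.sqrt_eq_rpow]
        congr 2
        · exact integral_congr_ae (.of_forall fun a => by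
            show ‖_‖ ^ (2:ℝ) = _ ^ (2:ℕ); rw [rpow2, Real.norm_eq_abs, sq_abs])
        · exact integral_congr_ae (.of_forall fun a => by
            show ‖_‖ ^ (2:ℝ) = _ ^ (2:ℕ); rw [rpow2, Real.norm_eq_abs, sq_abs])


lemma exp_weight_integral (t : ℝ) (c : ℝ) (hc : 0 < c) :
    ∫ τ in (0:ℝ)..t, Real.exp (-((t - τ) * c)) = (1 - Real.exp (-(t * c))) / c := by
  have hF : ∀ τ : ℝ, HasDerivAt (fun σ : ℝ => Real.exp (-((t - σ) * c)) / c)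
      (Real.exp (-((t - τ) * c))) τ := by
    intro τ
    have h1 : HasDerivAt (fun σ : ℝ => -((t - σ) * c)) c τ := by
      have : (fun σ : ℝ => -((t - σ) * c)) = fun σ => σ * c - t * c := by
        funext σ; ring
      rw [this]
      simpa using (hasDerivAt_mul_const c).sub_const (t * c)
    have h2 := (Real.hasDerivAt_exp (-((t - τ) * c))).comp τ h1
    have h3 := h2.div_const c
    simpa [mul_div_assoc, mul_div_cancel_right₀ _ (ne_of_gt hc)] using h3
  have hcont : Continuous fun τ : ℝ => Real.exp (-((t - τ) * c)) := by
    apply Real.continuous_exp.comp; continuity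
  rw [intervalIntegral.integral_eq_sub_of_hasDerivAt (fun τ _ => hF τ)
    (hcont.intervalIntegrable _ _)]
  simp [sub_self]
  ring



lemma sumSq_eq (v : Fin 3 → ℂ) :
    ∑ i, ‖v i‖ ^ 2 = ‖(EuclideanSpace.equiv (Fin 3) ℂ).symm v‖ ^ 2 := by
  rw [EuclideanSpace.norm_eq, Real.sq_sqrt (by positivity)]
  rfl

lemma norm_coe_xi (ξ : EuclideanSpace ℝ (Fin 3)) :
    ‖(EuclideanSpace.equiv (Fin 3) ℂ).symm (fun i => ((ξ i : ℝ) : ℂ))‖ = ‖ξ‖ := by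
  rw [EuclideanSpace.norm_eq, EuclideanSpace.norm_eq]
  congr 1
  apply Finset.sum_congr rfl
  intro i _
  simp [Complex.norm_real]

lemma lerayM_sum_le (ξ : EuclideanSpace ℝ (Fin 3)) (hξ : ξ ≠ 0) (w : Fin 3 → ℂ) :
    ∑ i, ‖lerayM ξ w i‖ ^ 2 ≤ ∑ i, ‖w i‖ ^ 2 := by
  classical
  set Ξ : EuclideanSpace ℂ (Fin 3) := (EuclideanSpace.equiv (Fin 3) ℂ).symm
    (fun i => ((ξ i : ℝ) : ℂ)) with hΞ
  set W : EuclideanSpace ℂ (Fin 3) := (EuclideanSpace.equiv (Fin 3) ℂ).symm w with hW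
  have hr : ‖Ξ‖ = ‖ξ‖ := norm_coe_xi ξ
  have hrne : (‖ξ‖ : ℂ) ^ 2 ≠ 0 :=
    pow_ne_zero _ (Complex.ofReal_ne_zero.2 (norm_ne_zero_iff.2 hξ))
  have ha : (inner ℂ Ξ W : ℂ) = ∑ j, (ξ j : ℂ) * w j := by
    rw [PiLp.inner_apply]
    apply Finset.sum_congr rfl
    intro i _
    simp [Ξ, W]
    ring
  set a : ℂ := ∑ j, (ξ j : ℂ) * w j with haa
  set p : EuclideanSpace ℂ (Fin 3) := (a / ((‖ξ‖:ℂ)^2)) • Ξ with hp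
  have hinner : (inner ℂ p (W - p) : ℂ) = 0 := by
    rw [inner_smul_left, inner_sub_right, hp, inner_smul_right, ← ha,
      inner_self_eq_norm_sq_to_K, hr]
    erw [div_mul_cancel₀ _ hrne, sub_self, mul_zero]
  have hdecomp : W = p + (W - p) := by abel
  have hnorm := norm_add_sq_eq_norm_sq_add_norm_sq_of_inner_eq_zero _ _ hinner
  rw [← hdecomp] at hnorm
  have hle : ‖W - p‖ ^ 2 ≤ ‖W‖ ^ 2 := by
    rw [pow_two, pow_two]; nlinarith [norm_nonneg p, norm_nonneg (W - p)]
  have hWp : (EuclideanSpace.equiv (Fin 3) ℂ).symm (lerayM ξ w) = W - p := by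
    apply PiLp.ext
    intro i
    simp [lerayM, W, p, Ξ, EuclideanSpace.equiv]
    ring
  rw [sumSq_eq, sumSq_eq, hWp]
  exact hle

lemma memLp_comp_proj {v : EuclideanSpace ℝ (Fin 3) → EuclideanSpace ℝ (Fin 3)}
    (hv : MemLp v 2 volume) (j : Fin 3) :
    MemLp (fun x => v x j) 2 volume :=
  (EuclideanSpace.proj j : EuclideanSpace ℝ (Fin 3) →L[ℝ] ℝ).comp_memLp' hv

lemma norm_sq_pi (y : EuclideanSpace ℝ (Fin 3)) : ‖y‖ ^ 2 = ∑ j, (y j) ^ 2 := by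
  rw [EuclideanSpace.norm_eq, Real.sq_sqrt (by positivity)]
  exact Finset.sum_congr rfl fun j _ => by rw [Real.norm_eq_abs, sq_abs]

lemma nonlin_sum_le (u : ℝ → EuclideanSpace ℝ (Fin 3) → EuclideanSpace ℝ (Fin 3))
    (τ : ℝ) (ξ : EuclideanSpace ℝ (Fin 3)) (E : ℝ)
    (hu : MemLp (u τ) 2 volume) (hE : (∫ x, ‖u τ x‖ ^ 2) ≤ E) :
    ∑ k, ‖nonlinNS u τ ξ k‖ ^ 2 ≤ ‖ξ‖ ^ 2 * E ^ 2 := by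
  classical
  have hE0 : 0 ≤ E := le_trans (integral_nonneg fun x => sq_nonneg _) hE
  set f : Fin 3 → EuclideanSpace ℝ (Fin 3) → ℝ := fun j x => u τ x j with hf
  have hfj : ∀ j, MemLp (f j) 2 volume := fun j => memLp_comp_proj hu j
  set e : Fin 3 → ℝ := fun j => ∫ x, (f j x) ^ 2 with he
  have he_nonneg : ∀ j, 0 ≤ e j := fun j => integral_nonneg (fun x => sq_nonneg _)
  have hsum_e : ∑ j, e j ≤ E := by
    have : ∑ j, e j = ∫ x, ∑ j, (f j x) ^ 2 :=
      (integral_finset_sum _ (fun j _ => (hfj j).integrable_sq)).symm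
    rw [this]
    refine le_trans (le_of_eq (integral_congr_ae (.of_forall fun x => ?_))) hE
    rw [norm_sq_pi]
  have hb : ∀ j k, ‖𝓕 (fun x => ((f j x : ℝ) : ℂ) * ((f k x : ℝ) : ℂ)) ξ‖
      ≤ Real.sqrt (e j) * Real.sqrt (e k) := by
    intro j k
    refine (ft_norm_le _ _).trans ?_
    refine le_trans (le_of_eq (integral_congr_ae (.of_forall fun x => ?_)))
      (cs_integral (hfj j) (hfj k))
    show ‖((f j x : ℝ) : ℂ) * ((f k x : ℝ) : ℂ)‖ = _
    rw [norm_mul, Complex.norm_real, Complex.norm_real, Real.norm_eq_abs, Real.norm_eq_abs]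
  have hcomp : ∀ k, ‖nonlinNS u τ ξ k‖ ≤ ∑ j, |ξ j| * (Real.sqrt (e j) * Real.sqrt (e k)) := by
    intro k
    refine (norm_sum_le _ _).trans (Finset.sum_le_sum fun j _ => ?_)
    rw [norm_mul, norm_mul, Complex.norm_I, one_mul, Complex.norm_real, Real.norm_eq_abs]
    exact mul_le_mul_of_nonneg_left (hb j k) (abs_nonneg _)
  have hxi : ∑ j, (ξ j) ^ 2 = ‖ξ‖ ^ 2 := (norm_sq_pi ξ).symm
  have hCS : (∑ j, |ξ j| * Real.sqrt (e j)) ^ 2 ≤ ‖ξ‖ ^ 2 * E := by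
    refine le_trans (Finset.sum_mul_sq_le_sq_mul_sq _ _ _) ?_
    rw [show ∑ j, |ξ j| ^ 2 = ‖ξ‖ ^ 2 from by rw [← hxi]; exact Finset.sum_congr rfl fun j _ => sq_abs _]
    refine mul_le_mul_of_nonneg_left ?_ (by positivity)
    refine le_trans (le_of_eq (Finset.sum_congr rfl fun j _ => Real.sq_sqrt (he_nonneg j))) hsum_e
  calc ∑ k, ‖nonlinNS u τ ξ k‖ ^ 2
      ≤ ∑ k, ((∑ j, |ξ j| * Real.sqrt (e j)) * Real.sqrt (e k)) ^ 2 := by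
        refine Finset.sum_le_sum fun k _ => ?_
        have h1 : ‖nonlinNS u τ ξ k‖ ≤ (∑ j, |ξ j| * Real.sqrt (e j)) * Real.sqrt (e k) := by
          refine (hcomp k).trans (le_of_eq ?_)
          rw [Finset.sum_mul]
          exact Finset.sum_congr rfl fun j _ => by ring
        exact pow_le_pow_left₀ (norm_nonneg _) h1 2
    _ = (∑ j, |ξ j| * Real.sqrt (e j)) ^ 2 * ∑ k, e k := by
        rw [Finset.mul_sum]
        exact Finset.sum_congr rfl fun k _ => by
          rw [mul_pow, Real.sq_sqrt (he_nonneg k)]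
    _ ≤ (‖ξ‖ ^ 2 * E) * E := by
        refine mul_le_mul hCS hsum_e (Finset.sum_nonneg fun k _ => he_nonneg k) (mul_nonneg (sq_nonneg _) hE0)
    _ = ‖ξ‖ ^ 2 * E ^ 2 := by ring

lemma key_B_bound (t r E : ℝ) (ht : 0 ≤ t) (hr : 0 < r) (hE : 0 ≤ E)
    (ℓ : ℝ → Fin 3 → ℂ)
    (hℓ : ∀ τ ∈ Set.Icc (0:ℝ) t, ∑ i, ‖ℓ τ i‖ ^ 2 ≤ (r * E) ^ 2) :
    r * ‖(EuclideanSpace.equiv (Fin 3) ℂ).symm (fun i =>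
        ∫ τ in (0:ℝ)..t, Complex.exp (-(((t - τ) * r ^ 2 : ℝ) : ℂ)) * ℓ τ i)‖ ≤ E := by
  classical
  set eR : ℝ → ℝ := fun τ => Real.exp (-((t - τ) * r ^ 2)) with heR
  have heR_cont : Continuous eR := by
    apply Real.continuous_exp.comp; continuity
  have heR_pos : ∀ τ, 0 < eR τ := fun τ => Real.exp_pos _
  have heR_le_one : ∀ τ ∈ Set.Icc (0:ℝ) t, eR τ ≤ 1 := by
    intro τ hτ
    rw [heR]
    apply Real.exp_le_one_iff.2
    have : 0 ≤ (t - τ) * r ^ 2 := mul_nonneg (by linarith [hτ.2]) (sq_nonneg r)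
    linarith
  set I : ℝ := ∫ τ in (0:ℝ)..t, eR τ with hIdef
  have hI0 : 0 ≤ I := intervalIntegral.integral_nonneg ht (fun τ _ => (heR_pos τ).le)
  have hI1 : r ^ 2 * I ≤ 1 := by
    rw [hIdef, heR]
    rw [exp_weight_integral t (r ^ 2) (by positivity)]
    rw [mul_comm, div_mul_cancel₀ _ (by positivity : (r:ℝ) ^ 2 ≠ 0)]
    have := Real.exp_pos (-(t * r ^ 2))
    linarith
  set C : ℝ := r * E with hC
  have hC0 : 0 ≤ C := mul_nonneg hr.le hE
  have hcomp : ∀ τ ∈ Set.Icc (0:ℝ) t, ∀ i, ‖ℓ τ i‖ ≤ C := by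
    intro τ hτ i
    have h1 : ‖ℓ τ i‖ ^ 2 ≤ C ^ 2 := by
      refine le_trans ?_ (hℓ τ hτ)
      exact Finset.single_le_sum (f := fun i => ‖ℓ τ i‖ ^ 2)
        (fun j _ => sq_nonneg _) (Finset.mem_univ i)
    exact (pow_le_pow_iff_left₀ (norm_nonneg _) hC0 two_ne_zero).1 h1
  set g : Fin 3 → ℝ → ℂ := fun i τ => Complex.exp (-(((t - τ) * r ^ 2 : ℝ) : ℂ)) * ℓ τ i with hg
  have hgnorm : ∀ i τ, ‖g i τ‖ = eR τ * ‖ℓ τ i‖ := by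
    intro i τ
    simp [hg, heR, Complex.norm_exp, ← Complex.ofReal_pow]
  set J : Fin 3 → ℝ := fun i => ∫ τ in (0:ℝ)..t, eR τ * ‖ℓ τ i‖ ^ 2 with hJ
  have hJ0 : ∀ i, 0 ≤ J i := fun i =>
    intervalIntegral.integral_nonneg ht (fun τ _ => by positivity)
  have hB : ∀ i, ‖∫ τ in (0:ℝ)..t, g i τ‖ ^ 2 ≤ I * J i := by
    intro i
    by_cases hgi : IntervalIntegrable (g i) volume 0 t
    · have hrestrict : IntegrableOn (g i) (Set.Ioc 0 t) volume :=
        (intervalIntegrable_iff_integrableOn_Ioc_of_le ht).1 hgi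
      have hcexp : Continuous fun τ : ℝ => (Complex.exp (-(((t - τ) * r ^ 2 : ℝ) : ℂ)))⁻¹ := by
        apply Continuous.inv₀
        · apply Complex.continuous_exp.comp; continuity
        · exact fun τ => Complex.exp_ne_zero _
      have hlmeas : AEStronglyMeasurable (fun τ => ℓ τ i)
          (volume.restrict (Set.Ioc 0 t)) := by
        have heq : (fun τ => ℓ τ i)
            = fun τ => (Complex.exp (-(((t - τ) * r ^ 2 : ℝ) : ℂ)))⁻¹ * g i τ := by
          funext τ
          rw [hg]
          rw [← mul_assoc, inv_mul_cancel₀ (Complex.exp_ne_zero _), one_mul]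
        rw [heq]
        exact (hcexp.aestronglyMeasurable.restrict).mul hrestrict.aestronglyMeasurable
      have hnmeas : AEStronglyMeasurable (fun τ => ‖ℓ τ i‖)
          (volume.restrict (Set.Ioc 0 t)) := hlmeas.norm
      have hJint : IntegrableOn (fun τ => eR τ * ‖ℓ τ i‖ ^ 2) (Set.Ioc 0 t) volume := by
        apply Integrable.mono' (g := fun τ => eR τ * C ^ 2)
            (show IntegrableOn (fun τ => eR τ * C ^ 2) (Set.Ioc 0 t) volume from
              (heR_cont.mul continuous_const).integrableOn_Ioc)
        · refine (heR_cont.aestronglyMeasurable.restrict).mul ?_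
          have : (fun τ => ‖ℓ τ i‖ ^ 2) = fun τ => ‖ℓ τ i‖ * ‖ℓ τ i‖ := by
            funext τ; ring
          rw [this]
          exact hnmeas.mul hnmeas
        · refine (ae_restrict_iff' measurableSet_Ioc).2 (Filter.Eventually.of_forall ?_)
          intro τ hτ
          have hτ' : τ ∈ Set.Icc (0:ℝ) t := ⟨hτ.1.le, hτ.2⟩
          rw [Real.norm_eq_abs, abs_of_nonneg (by positivity)]
          exact mul_le_mul_of_nonneg_left
            (pow_le_pow_left₀ (norm_nonneg _) (hcomp τ hτ' i) 2) (heR_pos τ).le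
      have hsq : Continuous fun τ => Real.sqrt (eR τ) := Real.continuous_sqrt.comp heR_cont
      have hfz : MemLp (fun τ => Real.sqrt (eR τ)) 2 (volume.restrict (Set.Ioc 0 t)) := by
        refine (memLp_two_iff_integrable_sq (hsq.aestronglyMeasurable.restrict)).2 ?_
        apply (heR_cont.integrableOn_Ioc).congr
        filter_upwards with τ
        simp [Real.sq_sqrt (heR_pos τ).le]
      have hgz : MemLp (fun τ => Real.sqrt (eR τ) * ‖ℓ τ i‖) 2
          (volume.restrict (Set.Ioc 0 t)) := by
        refine (memLp_two_iff_integrable_sq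
          ((hsq.aestronglyMeasurable.restrict).mul hnmeas)).2 ?_
        apply hJint.congr
        filter_upwards with τ
        simp [mul_pow, Real.sq_sqrt (heR_pos τ).le]
      have hcs := cs_integral hfz hgz
      have hIeq : (∫ τ in Set.Ioc (0:ℝ) t, Real.sqrt (eR τ) ^ 2) = I := by
        show _ = ∫ τ in (0:ℝ)..t, eR τ
        rw [intervalIntegral.integral_of_le ht]
        exact integral_congr_ae (.of_forall fun τ => by simp [Real.sq_sqrt (heR_pos τ).le])
      have hJeq : (∫ τ in Set.Ioc (0:ℝ) t, (Real.sqrt (eR τ) * ‖ℓ τ i‖) ^ 2) = J i := by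
        show _ = ∫ τ in (0:ℝ)..t, eR τ * ‖ℓ τ i‖ ^ 2
        rw [intervalIntegral.integral_of_le ht]
        exact integral_congr_ae (.of_forall fun τ => by
          simp [mul_pow, Real.sq_sqrt (heR_pos τ).le])
      have hnormle : ‖∫ τ in (0:ℝ)..t, g i τ‖ ≤ Real.sqrt I * Real.sqrt (J i) := by
        refine le_trans (intervalIntegral.norm_integral_le_integral_norm ht) ?_
        have h1 : (∫ τ in (0:ℝ)..t, ‖g i τ‖)
            = ∫ τ in Set.Ioc (0:ℝ) t, |Real.sqrt (eR τ)| * |Real.sqrt (eR τ) * ‖ℓ τ i‖| := by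
          rw [intervalIntegral.integral_of_le ht]
          refine integral_congr_ae (.of_forall fun τ => ?_)
          show ‖g i τ‖ = |Real.sqrt (eR τ)| * |Real.sqrt (eR τ) * ‖ℓ τ i‖|
          rw [hgnorm i τ, abs_of_nonneg (Real.sqrt_nonneg _),
            abs_of_nonneg (mul_nonneg (Real.sqrt_nonneg _) (norm_nonneg _)),
            ← mul_assoc, Real.mul_self_sqrt (heR_pos τ).le]
        rw [h1]
        rw [hIeq, hJeq] at hcs
        exact hcs
      calc ‖∫ τ in (0:ℝ)..t, g i τ‖ ^ 2 ≤ (Real.sqrt I * Real.sqrt (J i)) ^ 2 :=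
            pow_le_pow_left₀ (norm_nonneg _) hnormle 2
        _ = I * J i := by
            rw [mul_pow, Real.sq_sqrt hI0, Real.sq_sqrt (hJ0 i)]
    · rw [intervalIntegral.integral_undef hgi]
      simp only [norm_zero]
      rw [show (0:ℝ)^2 = 0 by ring]
      exact mul_nonneg hI0 (hJ0 i)
  have hJsum : ∑ i, J i ≤ C ^ 2 * I := by
    set S : Finset (Fin 3) := Finset.univ.filter
      (fun i => IntervalIntegrable (fun τ => eR τ * ‖ℓ τ i‖ ^ 2) volume 0 t) with hS
    have hJzero : ∀ i ∉ S, J i = 0 := by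
      intro i hi
      rw [hS, Finset.mem_filter] at hi
      push_neg at hi
      exact intervalIntegral.integral_undef (hi (Finset.mem_univ i))
    have hSint : ∀ i ∈ S, IntervalIntegrable (fun τ => eR τ * ‖ℓ τ i‖ ^ 2) volume 0 t :=
      fun i hi => (Finset.mem_filter.1 hi).2
    have hsplit : ∑ i, J i = ∑ i ∈ S, J i :=
      (Finset.sum_subset (Finset.subset_univ S) (fun i _ hi => hJzero i hi)).symm
    have hsum_int : ∑ i ∈ S, J i = ∫ τ in (0:ℝ)..t, ∑ i ∈ S, eR τ * ‖ℓ τ i‖ ^ 2 :=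
      (intervalIntegral.integral_finset_sum hSint).symm
    have hmono : (∫ τ in (0:ℝ)..t, ∑ i ∈ S, eR τ * ‖ℓ τ i‖ ^ 2)
        ≤ ∫ τ in (0:ℝ)..t, eR τ * C ^ 2 := by
      refine intervalIntegral.integral_mono_on ht ?_
        ((heR_cont.mul continuous_const).intervalIntegrable _ _) ?_
      · have h := IntervalIntegrable.sum S hSint
        have heq : (∑ i ∈ S, fun τ => eR τ * ‖ℓ τ i‖ ^ 2)
            = fun τ => ∑ i ∈ S, eR τ * ‖ℓ τ i‖ ^ 2 := by
          funext τ
          simp [Finset.sum_apply]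
        rwa [heq] at h
      intro τ hτ
      calc ∑ i ∈ S, eR τ * ‖ℓ τ i‖ ^ 2 ≤ ∑ i, eR τ * ‖ℓ τ i‖ ^ 2 :=
            Finset.sum_le_sum_of_subset_of_nonneg (Finset.subset_univ S)
              (fun i _ _ => by positivity)
        _ = eR τ * ∑ i, ‖ℓ τ i‖ ^ 2 := by rw [Finset.mul_sum]
        _ ≤ eR τ * C ^ 2 := mul_le_mul_of_nonneg_left (hℓ τ hτ) (heR_pos τ).le
    have hconst : (∫ τ in (0:ℝ)..t, eR τ * C ^ 2) = C ^ 2 * I := by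
      rw [intervalIntegral.integral_mul_const]
      ring
    rw [hsplit, hsum_int]
    rw [hconst] at hmono
    exact hmono
  have hnormsq : ‖(EuclideanSpace.equiv (Fin 3) ℂ).symm (fun i =>
      ∫ τ in (0:ℝ)..t, g i τ)‖ ^ 2 ≤ C ^ 2 * I ^ 2 := by
    rw [← sumSq_eq]
    calc ∑ i, ‖∫ τ in (0:ℝ)..t, g i τ‖ ^ 2 ≤ ∑ i, I * J i :=
          Finset.sum_le_sum fun i _ => hB i
      _ = I * ∑ i, J i := by rw [← Finset.mul_sum]
      _ ≤ I * (C ^ 2 * I) := mul_le_mul_of_nonneg_left hJsum hI0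
      _ = C ^ 2 * I ^ 2 := by ring
  show r * ‖(EuclideanSpace.equiv (Fin 3) ℂ).symm (fun i =>
      ∫ τ in (0:ℝ)..t, g i τ)‖ ≤ E
  have hsq : (r * ‖(EuclideanSpace.equiv (Fin 3) ℂ).symm (fun i =>
      ∫ τ in (0:ℝ)..t, g i τ)‖) ^ 2 ≤ E ^ 2 := by
    have h1 : (r * ‖(EuclideanSpace.equiv (Fin 3) ℂ).symm (fun i =>
        ∫ τ in (0:ℝ)..t, g i τ)‖) ^ 2
        = r ^ 2 * ‖(EuclideanSpace.equiv (Fin 3) ℂ).symm (fun i =>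
        ∫ τ in (0:ℝ)..t, g i τ)‖ ^ 2 := by ring
    rw [h1]
    calc r ^ 2 * ‖(EuclideanSpace.equiv (Fin 3) ℂ).symm (fun i =>
        ∫ τ in (0:ℝ)..t, g i τ)‖ ^ 2 ≤ r ^ 2 * (C ^ 2 * I ^ 2) :=
          mul_le_mul_of_nonneg_left hnormsq (sq_nonneg r)
      _ = (r ^ 2 * I) ^ 2 * E ^ 2 := by rw [hC]; ring
      _ ≤ 1 ^ 2 * E ^ 2 := by
          refine mul_le_mul_of_nonneg_right ?_ (sq_nonneg E)
          refine pow_le_pow_left₀ (mul_nonneg (sq_nonneg r) hI0) hI1 2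
      _ = E ^ 2 := by ring
  exact (pow_le_pow_iff_left₀ (mul_nonneg hr.le (norm_nonneg _)) hE two_ne_zero).1 hsq

/-- propagation of the `𝒴¹` bound for mild Navier–Stokes
solutions. Let `u₀ ∈ L²(ℝ³;ℝ³)` with `‖u₀‖_{𝒴¹} = sup_ξ |ξ| |û₀(ξ)| < ∞`
(encoded by an arbitrary upper bound `M`), and let `u : [0,∞) → L²(ℝ³;ℝ³)`
satisfy `‖u(τ)‖_{L²} ≤ ‖u₀‖_{L²}` for all `τ ≥ 0` and the Duhamel identity in
Fourier variables. Then `sup_{t ≥ 0} ‖u(t)‖_{𝒴¹} ≤ ‖u₀‖_{𝒴¹} + ‖u₀‖²_{L²}`. -/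
theorem Y1_propagation_NSE
    (u₀ : EuclideanSpace ℝ (Fin 3) → EuclideanSpace ℝ (Fin 3))
    (u : ℝ → EuclideanSpace ℝ (Fin 3) → EuclideanSpace ℝ (Fin 3))
    (hL2₀ : MemLp u₀ 2 volume)
    (hL2 : ∀ t, 0 ≤ t → MemLp (u t) 2 volume)
    (M : ℝ) (hM : ∀ ξ : EuclideanSpace ℝ (Fin 3), ‖ξ‖ * ‖ftv u₀ ξ‖ ≤ M)
    (henergy : ∀ τ, 0 ≤ τ →
      (∫ x : EuclideanSpace ℝ (Fin 3), ‖u τ x‖ ^ 2)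
        ≤ ∫ x : EuclideanSpace ℝ (Fin 3), ‖u₀ x‖ ^ 2)
    (hduhamel : ∀ t : ℝ, 0 ≤ t → ∀ᵐ ξ : EuclideanSpace ℝ (Fin 3), ∀ i : Fin 3,
      ftv (u t) ξ i
        = Complex.exp (-((t * ‖ξ‖ ^ 2 : ℝ) : ℂ)) * ftv u₀ ξ i
          - ∫ τ in (0:ℝ)..t, Complex.exp (-(((t - τ) * ‖ξ‖ ^ 2 : ℝ) : ℂ))
              * lerayM ξ (nonlinNS u τ ξ) i) :
    ∀ t, 0 ≤ t → ∀ ξ : EuclideanSpace ℝ (Fin 3),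
      ‖ξ‖ * ‖ftv (u t) ξ‖ ≤ M + ∫ x : EuclideanSpace ℝ (Fin 3), ‖u₀ x‖ ^ 2 := by
  intro t ht ξ₀
  set E : ℝ := ∫ x : EuclideanSpace ℝ (Fin 3), ‖u₀ x‖ ^ 2 with hEdef
  have hE0 : 0 ≤ E := integral_nonneg fun x => sq_nonneg _
  have hM0 : 0 ≤ M := by simpa using hM 0
  have hae : ∀ᵐ ξ : EuclideanSpace ℝ (Fin 3), ‖ξ‖ * ‖ftv (u t) ξ‖ ≤ M + E := by
    filter_upwards [hduhamel t ht] with ξ hξ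
    rcases eq_or_ne ξ 0 with h0 | h0
    · rw [h0]
      simp only [norm_zero, zero_mul]
      linarith
    · have hr : 0 < ‖ξ‖ := norm_pos_iff.2 h0
      set vB : EuclideanSpace ℂ (Fin 3) := (EuclideanSpace.equiv (Fin 3) ℂ).symm (fun i =>
          ∫ τ in (0:ℝ)..t, Complex.exp (-(((t - τ) * ‖ξ‖ ^ 2 : ℝ) : ℂ))
            * lerayM ξ (nonlinNS u τ ξ) i) with hvB
      have hvec : ftv (u t) ξ
          = (Complex.exp (-((t * ‖ξ‖ ^ 2 : ℝ) : ℂ))) • ftv u₀ ξ - vB := by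
        refine PiLp.ext fun i => ?_
        have := hξ i
        simpa [hvB, smul_eq_mul] using this
      have hA : ‖ξ‖ * ‖(Complex.exp (-((t * ‖ξ‖ ^ 2 : ℝ) : ℂ))) • ftv u₀ ξ‖ ≤ M := by
        rw [norm_smul]
        have hc : ‖Complex.exp (-((t * ‖ξ‖ ^ 2 : ℝ) : ℂ))‖ ≤ 1 := by
          rw [Complex.norm_exp]
          simp only [Complex.neg_re, Complex.ofReal_re]
          apply Real.exp_le_one_iff.2
          have : 0 ≤ t * ‖ξ‖ ^ 2 := mul_nonneg ht (sq_nonneg _)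
          linarith
        calc ‖ξ‖ * (‖Complex.exp (-((t * ‖ξ‖ ^ 2 : ℝ) : ℂ))‖ * ‖ftv u₀ ξ‖)
            = ‖Complex.exp (-((t * ‖ξ‖ ^ 2 : ℝ) : ℂ))‖ * (‖ξ‖ * ‖ftv u₀ ξ‖) := by ring
          _ ≤ 1 * (‖ξ‖ * ‖ftv u₀ ξ‖) :=
              mul_le_mul_of_nonneg_right hc (mul_nonneg (norm_nonneg _) (norm_nonneg _))
          _ = ‖ξ‖ * ‖ftv u₀ ξ‖ := one_mul _
          _ ≤ M := hM ξ
      have hB : ‖ξ‖ * ‖vB‖ ≤ E := by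
        refine key_B_bound t ‖ξ‖ E ht hr hE0 (fun τ => lerayM ξ (nonlinNS u τ ξ)) ?_
        intro τ hτ
        calc ∑ i, ‖lerayM ξ (nonlinNS u τ ξ) i‖ ^ 2
            ≤ ∑ i, ‖nonlinNS u τ ξ i‖ ^ 2 := lerayM_sum_le ξ h0 _
          _ ≤ ‖ξ‖ ^ 2 * E ^ 2 := nonlin_sum_le u τ ξ E (hL2 τ hτ.1) (henergy τ hτ.1)
          _ = (‖ξ‖ * E) ^ 2 := by ring
      calc ‖ξ‖ * ‖ftv (u t) ξ‖
          ≤ ‖ξ‖ * (‖(Complex.exp (-((t * ‖ξ‖ ^ 2 : ℝ) : ℂ))) • ftv u₀ ξ‖ + ‖vB‖) := by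
            rw [hvec]
            exact mul_le_mul_of_nonneg_left (norm_sub_le _ _) (norm_nonneg _)
        _ = ‖ξ‖ * ‖(Complex.exp (-((t * ‖ξ‖ ^ 2 : ℝ) : ℂ))) • ftv u₀ ξ‖ + ‖ξ‖ * ‖vB‖ := by
            ring
        _ ≤ M + E := add_le_add hA hB
  have hcont : Continuous fun ξ : EuclideanSpace ℝ (Fin 3) => ‖ξ‖ * ‖ftv (u t) ξ‖ := by
    have h1 : Continuous fun ξ : EuclideanSpace ℝ (Fin 3) => ftv (u t) ξ := by
      have hcomp : ∀ i : Fin 3,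
          Continuous fun ξ : EuclideanSpace ℝ (Fin 3) =>
            𝓕 (fun x => ((u t x i : ℝ) : ℂ)) ξ := by
        intro i
        by_cases hint : Integrable (fun x => ((u t x i : ℝ) : ℂ)) volume
        · exact ft_continuous hint
        · have : (fun ξ : EuclideanSpace ℝ (Fin 3) => 𝓕 (fun x => ((u t x i : ℝ) : ℂ)) ξ)
              = fun _ => 0 := funext fun ξ => ft_zero_of_not_integrable hint ξ
          rw [this]
          exact continuous_const
      exact ((EuclideanSpace.equiv (Fin 3) ℂ).symm.continuous).comp
        (continuous_pi fun i => hcomp i)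
    exact continuous_norm.mul h1.norm
  have hclosed : IsClosed {ξ : EuclideanSpace ℝ (Fin 3) | ‖ξ‖ * ‖ftv (u t) ξ‖ ≤ M + E} :=
    isClosed_le hcont continuous_const
  have hdense : Dense {ξ : EuclideanSpace ℝ (Fin 3) | ‖ξ‖ * ‖ftv (u t) ξ‖ ≤ M + E} :=
    MeasureTheory.Measure.dense_of_ae hae
  have huniv : {ξ : EuclideanSpace ℝ (Fin 3) | ‖ξ‖ * ‖ftv (u t) ξ‖ ≤ M + E} = Set.univ := by
    rw [← hclosed.closure_eq]
    exact hdense.closure_eq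
  exact Set.eq_univ_iff_forall.1 huniv ξ₀
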